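/- Let n, m, d be positive integers, γ ∈ (0,1), A an n×n real matrix, B an n×m real matrix, K an m×n real matrix, Q an n×n positive semidefinite real matrix and R an m×m positive definite real matrix. Set 𝒜 = A + BK and Q̄ = Q + KᵀRK, assume γ‖𝒜‖² < 1 for the operator norm, and let P = Σ_{s=0}^{∞} γˢ (𝒜ˢ)ᵀ Q̄ 𝒜ˢ (which converges and is positive semidefinite). Let f₁, …, f_d : ℝⁿ → ℝᵐ be globally Lipschitz, continuous functions that are linearly independent in the space of functions ℝⁿ → ℝᵐ, and let ρ₀ be a Borel probability measure on ℝⁿ with full support and finite second moment ∫‖x‖² dρ₀(x) < ∞. Then the d×d matrix H with entries H_{ij} = ∫ [ f_i(x)ᵀ Bᵀ P B f_j(x) + Σ_{t=0}^{∞} γᵗ f_i(𝒜ᵗx)ᵀ R f_j(𝒜ᵗx) ] dρ₀(x) is well defined (all series and integrals converge absolutely), symmetric, and positive definite: for every Δθ ∈ ℝ^d with Δθ ≠ 0, Δθᵀ H Δθ > 0. -/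

import Mathlib

open Matrix MeasureTheory Filter
open scoped Matrix.Norms.L2Operator

/-! ### Auxiliary lemmas -/

section Aux

/-- Euclidean (ℓ²) version of a plain vector. -/
noncomputable def E2 {n : ℕ} (y : Fin n → ℝ) : EuclideanSpace ℝ (Fin n) :=
  (WithLp.equiv 2 _).symm y

lemma E2_norm_eq {n : ℕ} (y : Fin n → ℝ) : ‖E2 y‖ = Real.sqrt (∑ i, ‖y i‖ ^ 2) := by
  rw [EuclideanSpace.norm_eq]; rfl

lemma sup_le_E2 {n : ℕ} (y : Fin n → ℝ) : ‖y‖ ≤ ‖E2 y‖ := by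
  rcases isEmpty_or_nonempty (Fin n) with h | h
  · simp [Subsingleton.elim y 0, E2]
  rw [E2_norm_eq, pi_norm_le_iff_of_nonneg (Real.sqrt_nonneg _)]
  intro i
  have : ‖y i‖ = Real.sqrt (‖y i‖ ^ 2) := by rw [Real.sqrt_sq (norm_nonneg _)]
  rw [this]
  exact Real.sqrt_le_sqrt (Finset.single_le_sum (fun j _ => sq_nonneg ‖y j‖) (Finset.mem_univ i))

lemma E2_le {n : ℕ} (y : Fin n → ℝ) : ‖E2 y‖ ≤ Real.sqrt n * ‖y‖ := by
  rw [E2_norm_eq]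
  calc Real.sqrt (∑ i, ‖y i‖ ^ 2) ≤ Real.sqrt ((n : ℝ) * ‖y‖ ^ 2) := by
        apply Real.sqrt_le_sqrt
        calc ∑ i, ‖y i‖ ^ 2 ≤ ∑ _i : Fin n, ‖y‖ ^ 2 :=
              Finset.sum_le_sum fun i _ =>
                pow_le_pow_left₀ (norm_nonneg _) (norm_le_pi_norm y i) 2
          _ = (n : ℝ) * ‖y‖ ^ 2 := by simp [mul_comm]
    _ = Real.sqrt n * ‖y‖ := by
        rw [Real.sqrt_mul (Nat.cast_nonneg n), Real.sqrt_sq (norm_nonneg _)]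

lemma E2_mulVec {n m : ℕ} (M : Matrix (Fin m) (Fin n) ℝ) (y : Fin n → ℝ) :
    ‖E2 (M.mulVec y)‖ ≤ ‖M‖ * ‖E2 y‖ := M.l2_opNorm_mulVec (E2 y)

lemma mulVec_sup_bound {n m : ℕ} (M : Matrix (Fin m) (Fin n) ℝ) (y : Fin n → ℝ) :
    ‖M.mulVec y‖ ≤ Real.sqrt n * ‖M‖ * ‖y‖ := by
  calc ‖M.mulVec y‖ ≤ ‖E2 (M.mulVec y)‖ := sup_le_E2 _
    _ ≤ ‖M‖ * ‖E2 y‖ := E2_mulVec M y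
    _ ≤ ‖M‖ * (Real.sqrt n * ‖y‖) :=
        mul_le_mul_of_nonneg_left (E2_le y) (norm_nonneg M)
    _ = Real.sqrt n * ‖M‖ * ‖y‖ := by ring

/-- quadratic form evaluation as a linear map in the matrix argument -/
def quadLM {n : ℕ} (u v : Fin n → ℝ) : Matrix (Fin n) (Fin n) ℝ →ₗ[ℝ] ℝ where
  toFun M := u ⬝ᵥ M.mulVec v
  map_add' M N := by simp [Matrix.add_mulVec, dotProduct_add]
  map_smul' c M := by simp [Matrix.smul_mulVec, dotProduct_smul, smul_eq_mul]

def entryLM {n : ℕ} (i j : Fin n) : Matrix (Fin n) (Fin n) ℝ →ₗ[ℝ] ℝ where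
  toFun M := M i j
  map_add' _ _ := rfl
  map_smul' _ _ := rfl

noncomputable def quadCLM {n : ℕ} (u v : Fin n → ℝ) : Matrix (Fin n) (Fin n) ℝ →L[ℝ] ℝ :=
  LinearMap.toContinuousLinearMap (quadLM u v)

noncomputable def entryCLM {n : ℕ} (i j : Fin n) : Matrix (Fin n) (Fin n) ℝ →L[ℝ] ℝ :=
  LinearMap.toContinuousLinearMap (entryLM i j)

lemma tsum_matrix_quad {n : ℕ} {M : ℕ → Matrix (Fin n) (Fin n) ℝ} (h : Summable M)
    (u v : Fin n → ℝ) :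
    u ⬝ᵥ (∑' s, M s).mulVec v = ∑' s, u ⬝ᵥ (M s).mulVec v :=
  (quadCLM u v).map_tsum h

lemma tsum_matrix_entry {n : ℕ} {M : ℕ → Matrix (Fin n) (Fin n) ℝ} (h : Summable M)
    (i j : Fin n) : (∑' s, M s) i j = ∑' s, M s i j :=
  (entryCLM i j).map_tsum h

lemma tsum_posSemidef {n : ℕ} {M : ℕ → Matrix (Fin n) (Fin n) ℝ} (h : Summable M)
    (hM : ∀ s, (M s).PosSemidef) : (∑' s, M s).PosSemidef := by
  refine posSemidef_iff_dotProduct_mulVec.mpr ⟨?_, ?_⟩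
  · ext i j
    rw [Matrix.conjTranspose_apply, star_trivial, tsum_matrix_entry h, tsum_matrix_entry h]
    exact tsum_congr fun s => by
      have hs := (hM s).1
      calc M s j i = (M s)ᴴ i j := by rw [Matrix.conjTranspose_apply, star_trivial]
        _ = M s i j := by rw [hs]
  · intro x
    rw [star_trivial, tsum_matrix_quad h]
    exact tsum_nonneg fun s => by simpa using (hM s).dotProduct_mulVec_nonneg x

lemma dot_bound {m : ℕ} (M : Matrix (Fin m) (Fin m) ℝ) (u v : Fin m → ℝ) :
    |u ⬝ᵥ M.mulVec v| ≤ (∑ i, ∑ j, |M i j|) * (‖u‖ * ‖v‖) := by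
  simp only [dotProduct, Matrix.mulVec, dotProduct]
  calc |∑ i, u i * ∑ j, M i j * v j| ≤ ∑ i, |u i * ∑ j, M i j * v j| :=
        Finset.abs_sum_le_sum_abs _ _
    _ ≤ ∑ i, ∑ j, |M i j| * (‖u‖ * ‖v‖) := by
        apply Finset.sum_le_sum; intro i _
        rw [abs_mul]
        calc |u i| * |∑ j, M i j * v j| ≤ ‖u‖ * ∑ j, |M i j * v j| := by
              apply mul_le_mul (norm_le_pi_norm u i) (Finset.abs_sum_le_sum_abs _ _)
                (abs_nonneg _) (norm_nonneg _)
          _ ≤ ‖u‖ * ∑ j, |M i j| * ‖v‖ := by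
              apply mul_le_mul_of_nonneg_left _ (norm_nonneg _)
              apply Finset.sum_le_sum; intro j _
              rw [abs_mul]
              exact mul_le_mul_of_nonneg_left (norm_le_pi_norm v j) (abs_nonneg _)
          _ = ∑ j, |M i j| * (‖u‖ * ‖v‖) := by
              rw [Finset.mul_sum]; congr 1; ext j; ring
    _ = (∑ i, ∑ j, |M i j|) * (‖u‖ * ‖v‖) := by
        rw [Finset.sum_mul]; congr 1; ext i; rw [Finset.sum_mul]

lemma norm_pow_le_c0 {n : ℕ} (𝒜 : Matrix (Fin n) (Fin n) ℝ) (t : ℕ) :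
    ‖𝒜 ^ t‖ ≤ max ‖(1 : Matrix (Fin n) (Fin n) ℝ)‖ 1 * ‖𝒜‖ ^ t := by
  rcases Nat.eq_zero_or_pos t with rfl | ht
  · simp [le_max_left]
  · calc ‖𝒜 ^ t‖ ≤ ‖𝒜‖ ^ t := norm_pow_le' 𝒜 ht
      _ ≤ max ‖(1 : Matrix (Fin n) (Fin n) ℝ)‖ 1 * ‖𝒜‖ ^ t := by
          nlinarith [le_max_right ‖(1 : Matrix (Fin n) (Fin n) ℝ)‖ 1,
            pow_nonneg (norm_nonneg 𝒜) t]

lemma pow_mulVec_bound {n : ℕ} (𝒜 : Matrix (Fin n) (Fin n) ℝ) :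
    ∃ c : ℝ, 0 ≤ c ∧ ∀ (t : ℕ) (x : Fin n → ℝ), ‖(𝒜 ^ t).mulVec x‖ ≤ c * ‖𝒜‖ ^ t * ‖x‖ := by
  refine ⟨Real.sqrt n * max ‖(1 : Matrix (Fin n) (Fin n) ℝ)‖ 1,
    mul_nonneg (Real.sqrt_nonneg _) (le_trans zero_le_one (le_max_right _ _)), fun t x => ?_⟩
  calc ‖(𝒜 ^ t).mulVec x‖ ≤ Real.sqrt n * ‖𝒜 ^ t‖ * ‖x‖ := mulVec_sup_bound _ x
    _ ≤ Real.sqrt n * (max ‖(1 : Matrix (Fin n) (Fin n) ℝ)‖ 1 * ‖𝒜‖ ^ t) * ‖x‖ := by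
        gcongr <;> first
          | exact norm_pow_le_c0 𝒜 t
          | exact Real.sqrt_nonneg _
    _ = Real.sqrt n * max ‖(1 : Matrix (Fin n) (Fin n) ℝ)‖ 1 * ‖𝒜‖ ^ t * ‖x‖ := by ring

/-- Master summability/growth lemma for the discounted series. -/
lemma series_master {n m : ℕ} {γ : ℝ} (hγ0 : 0 ≤ γ) (hγ1 : γ < 1)
    (𝒜 : Matrix (Fin n) (Fin n) ℝ) (R : Matrix (Fin m) (Fin m) ℝ)
    (hstab : γ * ‖𝒜‖ ^ 2 < 1)
    (u v : (Fin n → ℝ) → (Fin m → ℝ)) {Cu Cv : ℝ}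
    (hu : ∀ y, ‖u y‖ ≤ Cu * (1 + ‖y‖)) (hv : ∀ y, ‖v y‖ ≤ Cv * (1 + ‖y‖)) :
    ∃ D : ℝ, 0 ≤ D ∧ ∀ x : Fin n → ℝ,
      (Summable fun t : ℕ => γ ^ t * (u ((𝒜 ^ t).mulVec x) ⬝ᵥ R.mulVec (v ((𝒜 ^ t).mulVec x)))) ∧
      |∑' t : ℕ, γ ^ t * (u ((𝒜 ^ t).mulVec x) ⬝ᵥ R.mulVec (v ((𝒜 ^ t).mulVec x)))| ≤
        D * (1 + ‖x‖ ^ 2) := by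
  obtain ⟨c, hc, hcb⟩ := pow_mulVec_bound 𝒜
  set r := ‖𝒜‖ with hr
  have hr0 : 0 ≤ r := norm_nonneg _
  set q : ℝ := max γ (γ * r ^ 2) with hq
  have hq0 : 0 ≤ q := le_trans hγ0 (le_max_left _ _)
  have hq1 : q < 1 := max_lt hγ1 hstab
  set cR : ℝ := ∑ i, ∑ j, |R i j| with hcR
  have hcR0 : 0 ≤ cR := Finset.sum_nonneg fun i _ => Finset.sum_nonneg fun j _ => abs_nonneg _
  have hCu0 : 0 ≤ Cu := by have := hu 0; have h2 := norm_nonneg (u 0); simp at this; nlinarith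
  have hCv0 : 0 ≤ Cv := by have := hv 0; have h2 := norm_nonneg (v 0); simp at this; nlinarith
  have key : ∀ (x : Fin n → ℝ) (t : ℕ),
      |γ ^ t * (u ((𝒜 ^ t).mulVec x) ⬝ᵥ R.mulVec (v ((𝒜 ^ t).mulVec x)))| ≤
        2 * cR * Cu * Cv * (1 + c ^ 2 * ‖x‖ ^ 2) * q ^ t := by
    intro x t
    set y := (𝒜 ^ t).mulVec x with hy
    have hyb : ‖y‖ ≤ c * r ^ t * ‖x‖ := hcb t x
    have hy0 : (0:ℝ) ≤ ‖y‖ := norm_nonneg _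
    have hx0 : (0:ℝ) ≤ ‖x‖ := norm_nonneg _
    have h1 : |u y ⬝ᵥ R.mulVec (v y)| ≤ cR * (‖u y‖ * ‖v y‖) := dot_bound R _ _
    have h2 : ‖u y‖ * ‖v y‖ ≤ Cu * Cv * (1 + ‖y‖) ^ 2 := by
      have e := mul_le_mul (hu y) (hv y) (norm_nonneg _) (by positivity)
      calc ‖u y‖ * ‖v y‖ ≤ Cu * (1 + ‖y‖) * (Cv * (1 + ‖y‖)) := e
        _ = Cu * Cv * (1 + ‖y‖) ^ 2 := by ring
    have h3 : (1 + ‖y‖) ^ 2 ≤ 2 * (1 + ‖y‖ ^ 2) := by nlinarith [sq_nonneg (1 - ‖y‖)]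
    have h4 : ‖y‖ ^ 2 ≤ c ^ 2 * (r ^ 2) ^ t * ‖x‖ ^ 2 := by
      have e : (r ^ 2) ^ t = (r ^ t) ^ 2 := by rw [← pow_mul, ← pow_mul, mul_comm]
      rw [e]
      nlinarith [mul_self_le_mul_self hy0 hyb,
        mul_nonneg (mul_nonneg hc (pow_nonneg hr0 t)) hx0]
    have hγt : (0:ℝ) ≤ γ ^ t := pow_nonneg hγ0 t
    rw [abs_mul, abs_pow, abs_of_nonneg hγ0]
    have hcx : (0:ℝ) ≤ c ^ 2 * ‖x‖ ^ 2 := mul_nonneg (sq_nonneg c) (sq_nonneg ‖x‖)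
    have h5 : γ ^ t * (1 + c ^ 2 * (r ^ 2) ^ t * ‖x‖ ^ 2) ≤ q ^ t * (1 + c ^ 2 * ‖x‖ ^ 2) := by
      have e1 : γ ^ t ≤ q ^ t := pow_le_pow_left₀ hγ0 (le_max_left _ _) t
      have e2 : γ ^ t * (r ^ 2) ^ t ≤ q ^ t := by
        rw [← mul_pow]
        exact pow_le_pow_left₀ (mul_nonneg hγ0 (sq_nonneg r)) (le_max_right _ _) t
      have e3 := mul_le_mul_of_nonneg_left e2 hcx
      nlinarith
    have h6 : |u y ⬝ᵥ R.mulVec (v y)| ≤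
        2 * cR * Cu * Cv * (1 + c ^ 2 * (r ^ 2) ^ t * ‖x‖ ^ 2) := by
      calc |u y ⬝ᵥ R.mulVec (v y)| ≤ cR * (‖u y‖ * ‖v y‖) := h1
        _ ≤ cR * (Cu * Cv * (1 + ‖y‖) ^ 2) := mul_le_mul_of_nonneg_left h2 hcR0
        _ ≤ cR * (Cu * Cv * (2 * (1 + ‖y‖ ^ 2))) := by
            apply mul_le_mul_of_nonneg_left _ hcR0
            exact mul_le_mul_of_nonneg_left h3 (mul_nonneg hCu0 hCv0)
        _ ≤ cR * (Cu * Cv * (2 * (1 + c ^ 2 * (r ^ 2) ^ t * ‖x‖ ^ 2))) := by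
            apply mul_le_mul_of_nonneg_left _ hcR0
            apply mul_le_mul_of_nonneg_left _ (mul_nonneg hCu0 hCv0)
            have h20 : (0:ℝ) ≤ 2 := by norm_num
            apply mul_le_mul_of_nonneg_left _ h20
            linarith [h4]
        _ = 2 * cR * Cu * Cv * (1 + c ^ 2 * (r ^ 2) ^ t * ‖x‖ ^ 2) := by ring
    calc γ ^ t * |u y ⬝ᵥ R.mulVec (v y)|
        ≤ γ ^ t * (2 * cR * Cu * Cv * (1 + c ^ 2 * (r ^ 2) ^ t * ‖x‖ ^ 2)) :=
          mul_le_mul_of_nonneg_left h6 hγt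
      _ = 2 * cR * Cu * Cv * (γ ^ t * (1 + c ^ 2 * (r ^ 2) ^ t * ‖x‖ ^ 2)) := by ring
      _ ≤ 2 * cR * Cu * Cv * (q ^ t * (1 + c ^ 2 * ‖x‖ ^ 2)) := by
          apply mul_le_mul_of_nonneg_left h5
          exact mul_nonneg (mul_nonneg (mul_nonneg (by norm_num) hcR0) hCu0) hCv0
      _ = 2 * cR * Cu * Cv * (1 + c ^ 2 * ‖x‖ ^ 2) * q ^ t := by ring
  have hDpos : (0:ℝ) ≤ 2 * cR * Cu * Cv * (1 + c ^ 2) * (1 - q)⁻¹ :=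
    mul_nonneg (mul_nonneg (mul_nonneg (mul_nonneg (mul_nonneg (by norm_num) hcR0) hCu0) hCv0)
      (by nlinarith [sq_nonneg c])) (inv_nonneg.mpr (by linarith))
  refine ⟨2 * cR * Cu * Cv * (1 + c ^ 2) * (1 - q)⁻¹, hDpos, fun x => ?_⟩
  have hsumgeo : Summable fun t : ℕ => 2 * cR * Cu * Cv * (1 + c ^ 2 * ‖x‖ ^ 2) * q ^ t :=
    (summable_geometric_of_lt_one hq0 hq1).mul_left _
  have hsummable : Summable fun t : ℕ =>
      γ ^ t * (u ((𝒜 ^ t).mulVec x) ⬝ᵥ R.mulVec (v ((𝒜 ^ t).mulVec x))) := by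
    apply Summable.of_norm_bounded hsumgeo
    intro t
    simpa only [Real.norm_eq_abs] using key x t
  refine ⟨hsummable, ?_⟩
  have habs : Summable fun t : ℕ =>
      |γ ^ t * (u ((𝒜 ^ t).mulVec x) ⬝ᵥ R.mulVec (v ((𝒜 ^ t).mulVec x)))| := by
    simpa only [Real.norm_eq_abs] using hsummable.abs
  have hx20 : (0:ℝ) ≤ ‖x‖ ^ 2 := sq_nonneg _
  have hinv : (0:ℝ) ≤ (1 - q)⁻¹ := inv_nonneg.mpr (by linarith)
  calc |∑' t : ℕ, γ ^ t * (u ((𝒜 ^ t).mulVec x) ⬝ᵥ R.mulVec (v ((𝒜 ^ t).mulVec x)))|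
      ≤ ∑' t : ℕ, |γ ^ t * (u ((𝒜 ^ t).mulVec x) ⬝ᵥ R.mulVec (v ((𝒜 ^ t).mulVec x)))| := by
        simpa only [Real.norm_eq_abs] using
          norm_tsum_le_tsum_norm (f := fun t : ℕ =>
            γ ^ t * (u ((𝒜 ^ t).mulVec x) ⬝ᵥ R.mulVec (v ((𝒜 ^ t).mulVec x))))
            (by simpa only [Real.norm_eq_abs] using habs)
    _ ≤ ∑' t : ℕ, 2 * cR * Cu * Cv * (1 + c ^ 2 * ‖x‖ ^ 2) * q ^ t :=
        Summable.tsum_le_tsum (fun t => key x t) habs hsumgeo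
    _ = 2 * cR * Cu * Cv * (1 + c ^ 2 * ‖x‖ ^ 2) * (1 - q)⁻¹ := by
        rw [tsum_mul_left, tsum_geometric_of_lt_one hq0 hq1]
    _ ≤ 2 * cR * Cu * Cv * (1 + c ^ 2) * (1 - q)⁻¹ * (1 + ‖x‖ ^ 2) := by
        have e : (1 + c ^ 2 * ‖x‖ ^ 2) ≤ (1 + c ^ 2) * (1 + ‖x‖ ^ 2) := by
          nlinarith [sq_nonneg c]
        calc 2 * cR * Cu * Cv * (1 + c ^ 2 * ‖x‖ ^ 2) * (1 - q)⁻¹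
            ≤ 2 * cR * Cu * Cv * ((1 + c ^ 2) * (1 + ‖x‖ ^ 2)) * (1 - q)⁻¹ := by
              apply mul_le_mul_of_nonneg_right _ hinv
              apply mul_le_mul_of_nonneg_left e
              exact mul_nonneg (mul_nonneg (mul_nonneg (by norm_num) hcR0) hCu0) hCv0
          _ = 2 * cR * Cu * Cv * (1 + c ^ 2) * (1 - q)⁻¹ * (1 + ‖x‖ ^ 2) := by ring

lemma dot_sum_left {m d : ℕ} (v : Fin d → Fin m → ℝ) (w : Fin m → ℝ) :
    (∑ i, v i) ⬝ᵥ w = ∑ i, v i ⬝ᵥ w := by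
  simp only [dotProduct, Finset.sum_apply, Finset.sum_mul]
  exact Finset.sum_comm

lemma dot_sum_right {m d : ℕ} (w : Fin m → ℝ) (v : Fin d → Fin m → ℝ) :
    w ⬝ᵥ (∑ i, v i) = ∑ i, w ⬝ᵥ v i := by
  simp only [dotProduct, Finset.sum_apply, Finset.mul_sum]
  exact Finset.sum_comm

lemma mulVec_sum' {n' m d : ℕ} (M : Matrix (Fin m) (Fin n') ℝ) (v : Fin d → Fin n' → ℝ) :
    M.mulVec (∑ i, v i) = ∑ i, M.mulVec (v i) := by
  have := map_sum M.mulVecLin v Finset.univ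
  simpa only [Matrix.mulVecLin_apply] using this

lemma bilin_expand {d m : ℕ} (M : Matrix (Fin m) (Fin m) ℝ) (c : Fin d → ℝ)
    (u : Fin d → Fin m → ℝ) :
    ∑ i, ∑ j, c i * c j * (u i ⬝ᵥ M.mulVec (u j)) =
      (∑ k, c k • u k) ⬝ᵥ M.mulVec (∑ k, c k • u k) := by
  rw [mulVec_sum', dot_sum_left]
  apply Finset.sum_congr rfl
  intro i _
  rw [smul_dotProduct, dot_sum_right, smul_eq_mul, Finset.mul_sum]
  apply Finset.sum_congr rfl
  intro j _
  rw [Matrix.mulVec_smul, dotProduct_smul, smul_eq_mul]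
  ring

lemma dot_symm {m : ℕ} (M : Matrix (Fin m) (Fin m) ℝ) (hM : Mᵀ = M) (u v : Fin m → ℝ) :
    u ⬝ᵥ M.mulVec v = v ⬝ᵥ M.mulVec u := by
  rw [Matrix.dotProduct_mulVec, ← Matrix.mulVec_transpose, hM, dotProduct_comm]

lemma lip_growth {n m : ℕ} (u : (Fin n → ℝ) → (Fin m → ℝ)) (L : NNReal)
    (hL : LipschitzWith L u) : ∀ y, ‖u y‖ ≤ ((L : ℝ) + ‖u 0‖) * (1 + ‖y‖) := by
  intro y
  have h1 : ‖u y - u 0‖ ≤ (L : ℝ) * ‖y - 0‖ := by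
    simpa [dist_eq_norm] using hL.dist_le_mul y 0
  have h2 : ‖u y‖ - ‖u 0‖ ≤ ‖u y - u 0‖ := norm_sub_norm_le _ _
  have h3 : (0:ℝ) ≤ L := L.coe_nonneg
  have h4 : (0:ℝ) ≤ ‖y‖ := norm_nonneg _
  have h5 : (0:ℝ) ≤ ‖u 0‖ := norm_nonneg _
  simp only [sub_zero] at h1
  nlinarith

lemma continuous_dotform {n' m : ℕ} (M : Matrix (Fin m) (Fin m) ℝ)
    {u v : (Fin n' → ℝ) → (Fin m → ℝ)} (hu : Continuous u) (hv : Continuous v) :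
    Continuous fun x => u x ⬝ᵥ M.mulVec (v x) := by
  simp only [dotProduct, Matrix.mulVec]
  apply continuous_finset_sum
  intro i _
  apply Continuous.mul ((continuous_apply i).comp hu)
  exact continuous_finset_sum _ fun j _ =>
    continuous_const.mul ((continuous_apply j).comp hv)

lemma continuous_mulVec {n' m : ℕ} (M : Matrix (Fin m) (Fin n') ℝ) :
    Continuous fun x : Fin n' → ℝ => M.mulVec x := by
  apply continuous_pi
  intro i
  simp only [Matrix.mulVec, dotProduct]
  exact continuous_finset_sum _ fun j _ => (continuous_const.mul (continuous_apply j))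

lemma measurable_tsum_of_continuous {n' : ℕ} (F : ℕ → (Fin n' → ℝ) → ℝ)
    (hF : ∀ t, Continuous (F t)) (hsum : ∀ x, Summable fun t => F t x) :
    Measurable fun x => ∑' t, F t x := by
  apply measurable_of_tendsto_metrizable
    (f := fun N x => ∑ t ∈ Finset.range N, F t x)
  · intro N
    exact (continuous_finset_sum _ fun t _ => hF t).measurable
  · rw [tendsto_pi_nhds]
    intro x
    exact (hsum x).hasSum.tendsto_sum_nat

lemma integral_pos_of_cont {n' : ℕ} (ρ : Measure (Fin n' → ℝ)) [IsProbabilityMeasure ρ]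
    (hsupp : ∀ U : Set (Fin n' → ℝ), IsOpen U → U.Nonempty → 0 < ρ U)
    (h : (Fin n' → ℝ) → ℝ) (hc : Continuous h) (hnn : ∀ x, 0 ≤ h x)
    (hint : Integrable h ρ) (x₀ : Fin n' → ℝ) (hx₀ : 0 < h x₀) :
    0 < ∫ x, h x ∂ρ := by
  set U : Set (Fin n' → ℝ) := h ⁻¹' Set.Ioi (h x₀ / 2) with hU
  have hUopen : IsOpen U := isOpen_Ioi.preimage hc
  have hUne : U.Nonempty := ⟨x₀, by simp [hU]; linarith⟩
  have hUpos : 0 < ρ U := hsupp U hUopen hUne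
  have hUmeas : MeasurableSet U := hUopen.measurableSet
  have hUfin : ρ U ≠ ⊤ := measure_ne_top ρ U
  have h1 : h x₀ / 2 * (ρ U).toReal ≤ ∫ x in U, h x ∂ρ := by
    apply setIntegral_ge_of_const_le_real hUmeas hUfin
    · intro x hx
      exact le_of_lt hx
    · exact hint.integrableOn
  have h2 : ∫ x in U, h x ∂ρ ≤ ∫ x, h x ∂ρ :=
    setIntegral_le_integral hint (Filter.Eventually.of_forall hnn)
  have h3 : 0 < (ρ U).toReal := ENNReal.toReal_pos (ne_of_gt hUpos) hUfin
  have : 0 < h x₀ / 2 * (ρ U).toReal := mul_pos (by linarith) h3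
  linarith

lemma sum_sum_tsum_expand {d m : ℕ} (c : Fin d → ℝ) (γ : ℝ) (R : Matrix (Fin m) (Fin m) ℝ)
    (w : Fin d → ℕ → Fin m → ℝ)
    (hsum : ∀ i j, Summable fun t : ℕ => γ ^ t * (w i t ⬝ᵥ R.mulVec (w j t))) :
    ∑ i, ∑ j, c i * c j * ∑' t : ℕ, γ ^ t * (w i t ⬝ᵥ R.mulVec (w j t)) =
      ∑' t : ℕ, γ ^ t * ((∑ k, c k • w k t) ⬝ᵥ R.mulVec (∑ k, c k • w k t)) := by
  have hs1 : ∀ i j, Summable fun t : ℕ =>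
      c i * c j * (γ ^ t * (w i t ⬝ᵥ R.mulVec (w j t))) :=
    fun i j => (hsum i j).mul_left _
  have step1 : ∑ i, ∑ j, c i * c j * ∑' t : ℕ, γ ^ t * (w i t ⬝ᵥ R.mulVec (w j t)) =
      ∑ i, ∑ j, ∑' t : ℕ, c i * c j * (γ ^ t * (w i t ⬝ᵥ R.mulVec (w j t))) := by
    refine Finset.sum_congr rfl fun i _ => Finset.sum_congr rfl fun j _ => ?_
    rw [tsum_mul_left]
  rw [step1]
  have step2 : ∀ i : Fin d, ∑ j, ∑' t : ℕ, c i * c j * (γ ^ t * (w i t ⬝ᵥ R.mulVec (w j t))) =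
      ∑' t : ℕ, ∑ j, c i * c j * (γ ^ t * (w i t ⬝ᵥ R.mulVec (w j t))) := by
    intro i
    exact (Summable.tsum_finsetSum fun j _ => hs1 i j).symm
  rw [Finset.sum_congr rfl fun i _ => step2 i]
  rw [(Summable.tsum_finsetSum fun i _ =>
    (hasSum_sum fun j _ => (hs1 i j).hasSum).summable).symm]
  refine tsum_congr fun t => ?_
  calc ∑ i, ∑ j, c i * c j * (γ ^ t * (w i t ⬝ᵥ R.mulVec (w j t)))
      = γ ^ t * ∑ i, ∑ j, c i * c j * (w i t ⬝ᵥ R.mulVec (w j t)) := by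
        rw [Finset.mul_sum]
        refine Finset.sum_congr rfl fun i _ => ?_
        rw [Finset.mul_sum]
        refine Finset.sum_congr rfl fun j _ => ?_
        ring
    _ = γ ^ t * ((∑ k, c k • w k t) ⬝ᵥ R.mulVec (∑ k, c k • w k t)) := by
        rw [bilin_expand]

lemma psd_smul {n' : ℕ} {a : ℝ} (ha : 0 ≤ a) {M : Matrix (Fin n') (Fin n') ℝ}
    (hM : M.PosSemidef) : (a • M).PosSemidef := by
  refine posSemidef_iff_dotProduct_mulVec.mpr ⟨?_, ?_⟩
  · ext i j
    have h := congrFun (congrFun hM.1 i) j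
    simp only [Matrix.conjTranspose_apply, star_trivial, Matrix.smul_apply,
      smul_eq_mul] at h ⊢
    rw [h]
  · intro x
    have h := hM.dotProduct_mulVec_nonneg x
    simp only [star_trivial, Matrix.smul_mulVec, dotProduct_smul, smul_eq_mul] at h ⊢
    exact mul_nonneg ha h

lemma matrix_series_summable {n' : ℕ} {γ : ℝ} (hγ0 : 0 ≤ γ)
    (𝒜 Qb : Matrix (Fin n') (Fin n') ℝ) (hstab : γ * ‖𝒜‖ ^ 2 < 1) :
    Summable fun s : ℕ => γ ^ s • ((𝒜 ^ s)ᵀ * Qb * 𝒜 ^ s) := by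
  set c0 : ℝ := max ‖(1 : Matrix (Fin n') (Fin n') ℝ)‖ 1 with hc0
  have hc00 : 0 ≤ c0 := le_trans zero_le_one (le_max_right _ _)
  set q : ℝ := γ * ‖𝒜‖ ^ 2 with hq
  have hq0 : 0 ≤ q := mul_nonneg hγ0 (sq_nonneg _)
  apply Summable.of_norm_bounded (g := fun s => c0 ^ 2 * ‖Qb‖ * q ^ s)
    ((summable_geometric_of_lt_one hq0 hstab).mul_left _)
  intro s
  have hTn : ‖(𝒜 ^ s)ᵀ‖ = ‖𝒜 ^ s‖ := by
    rw [← Matrix.conjTranspose_eq_transpose_of_trivial]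
    exact Matrix.l2_opNorm_conjTranspose _
  have hpow : ‖𝒜 ^ s‖ ≤ c0 * ‖𝒜‖ ^ s := by
    rcases Nat.eq_zero_or_pos s with rfl | hs
    · simp [hc0, le_max_left]
    · calc ‖𝒜 ^ s‖ ≤ ‖𝒜‖ ^ s := norm_pow_le' 𝒜 hs
        _ ≤ c0 * ‖𝒜‖ ^ s := by
            nlinarith [le_max_right ‖(1 : Matrix (Fin n') (Fin n') ℝ)‖ 1,
              pow_nonneg (norm_nonneg 𝒜) s]
  have h1 : ‖(𝒜 ^ s)ᵀ * Qb * 𝒜 ^ s‖ ≤ ‖𝒜 ^ s‖ * ‖Qb‖ * ‖𝒜 ^ s‖ := by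
    calc ‖(𝒜 ^ s)ᵀ * Qb * 𝒜 ^ s‖ ≤ ‖(𝒜 ^ s)ᵀ * Qb‖ * ‖𝒜 ^ s‖ := norm_mul_le _ _
      _ ≤ ‖(𝒜 ^ s)ᵀ‖ * ‖Qb‖ * ‖𝒜 ^ s‖ := by
          gcongr
          exact norm_mul_le _ _
      _ = ‖𝒜 ^ s‖ * ‖Qb‖ * ‖𝒜 ^ s‖ := by rw [hTn]
  rw [norm_smul, Real.norm_eq_abs, abs_pow, abs_of_nonneg hγ0]
  have hA0 : (0:ℝ) ≤ ‖𝒜 ^ s‖ := norm_nonneg _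
  have hQ0 : (0:ℝ) ≤ ‖Qb‖ := norm_nonneg _
  have hγs : (0:ℝ) ≤ γ ^ s := pow_nonneg hγ0 s
  calc γ ^ s * ‖(𝒜 ^ s)ᵀ * Qb * 𝒜 ^ s‖ ≤ γ ^ s * (‖𝒜 ^ s‖ * ‖Qb‖ * ‖𝒜 ^ s‖) :=
        mul_le_mul_of_nonneg_left h1 hγs
    _ ≤ γ ^ s * ((c0 * ‖𝒜‖ ^ s) * ‖Qb‖ * (c0 * ‖𝒜‖ ^ s)) := by
        apply mul_le_mul_of_nonneg_left _ hγs
        have h2 : ‖𝒜 ^ s‖ * ‖Qb‖ ≤ (c0 * ‖𝒜‖ ^ s) * ‖Qb‖ := mul_le_mul_of_nonneg_right hpow hQ0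
        exact mul_le_mul h2 hpow hA0
          (mul_nonneg (mul_nonneg hc00 (pow_nonneg (norm_nonneg 𝒜) s)) hQ0)
    _ = c0 ^ 2 * ‖Qb‖ * (γ ^ s * (‖𝒜‖ ^ s * ‖𝒜‖ ^ s)) := by ring
    _ = c0 ^ 2 * ‖Qb‖ * q ^ s := by
        rw [hq, mul_pow]
        congr 1
        rw [← pow_mul, two_mul, pow_add]

lemma dotform_abs_bound {m : ℕ} (M : Matrix (Fin m) (Fin m) ℝ) (u v : Fin m → ℝ)
    {Cu Cv z : ℝ} (hCu : 0 ≤ Cu) (hCv : 0 ≤ Cv) (hz : 0 ≤ z)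
    (hu : ‖u‖ ≤ Cu * (1 + z)) (hv : ‖v‖ ≤ Cv * (1 + z)) :
    |u ⬝ᵥ M.mulVec v| ≤ 2 * (∑ i, ∑ j, |M i j|) * Cu * Cv * (1 + z ^ 2) := by
  set cM : ℝ := ∑ i, ∑ j, |M i j| with hcM
  have hcM0 : 0 ≤ cM := Finset.sum_nonneg fun i _ => Finset.sum_nonneg fun j _ => abs_nonneg _
  have h1 : |u ⬝ᵥ M.mulVec v| ≤ cM * (‖u‖ * ‖v‖) := dot_bound M u v
  have h2 : ‖u‖ * ‖v‖ ≤ Cu * Cv * (1 + z) ^ 2 := by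
    have e := mul_le_mul hu hv (norm_nonneg _) (by positivity)
    calc ‖u‖ * ‖v‖ ≤ Cu * (1 + z) * (Cv * (1 + z)) := e
      _ = Cu * Cv * (1 + z) ^ 2 := by ring
  have h3 : (1 + z) ^ 2 ≤ 2 * (1 + z ^ 2) := by nlinarith [sq_nonneg (1 - z)]
  calc |u ⬝ᵥ M.mulVec v| ≤ cM * (‖u‖ * ‖v‖) := h1
    _ ≤ cM * (Cu * Cv * (1 + z) ^ 2) := mul_le_mul_of_nonneg_left h2 hcM0
    _ ≤ cM * (Cu * Cv * (2 * (1 + z ^ 2))) := by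
        apply mul_le_mul_of_nonneg_left _ hcM0
        exact mul_le_mul_of_nonneg_left h3 (mul_nonneg hCu hCv)
    _ = 2 * cM * Cu * Cv * (1 + z ^ 2) := by ring

end Aux

/-- Cost-to-go matrix `P = Σ_s γˢ (𝒜ˢ)ᵀ Q̄ 𝒜ˢ`. -/
noncomputable def Pmat {n : ℕ} (γ : ℝ) (𝒜 Qb : Matrix (Fin n) (Fin n) ℝ) :
    Matrix (Fin n) (Fin n) ℝ :=
  ∑' s : ℕ, γ ^ s • ((𝒜 ^ s)ᵀ * Qb * 𝒜 ^ s)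

/-- The Hessian of the discounted LQR cost at the optimal policy,
`H_{ij} = ∫ [f_i(x)ᵀ BᵀPB f_j(x) + Σ_t γᵗ f_i(𝒜ᵗx)ᵀ R f_j(𝒜ᵗx)] dρ₀(x)`. -/
noncomputable def hessH {n m d : ℕ} (γ : ℝ) (𝒜 : Matrix (Fin n) (Fin n) ℝ)
    (B : Matrix (Fin n) (Fin m) ℝ) (P : Matrix (Fin n) (Fin n) ℝ)
    (R : Matrix (Fin m) (Fin m) ℝ) (f : Fin d → (Fin n → ℝ) → (Fin m → ℝ))
    (ρ₀ : Measure (Fin n → ℝ)) : Matrix (Fin d) (Fin d) ℝ :=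
  Matrix.of fun i j =>
    ∫ x, (f i x ⬝ᵥ (Bᵀ * P * B).mulVec (f j x) +
      ∑' t : ℕ, γ ^ t * (f i ((𝒜 ^ t).mulVec x) ⬝ᵥ R.mulVec (f j ((𝒜 ^ t).mulVec x)))) ∂ρ₀

/-- The Hessian `H` of the discounted LQR cost at the optimal policy for the class
`π_θ = Σ_k θ_k f_k` is well defined, symmetric and positive definite: here `𝒜 = A + BK`,
`Q̄ = Q + KᵀRK`, `γ‖𝒜‖² < 1` for the ℓ²-operator norm, `P = Σ_s γˢ(𝒜ˢ)ᵀQ̄𝒜ˢ`, the `f_k` are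
Lipschitz, continuous and linearly independent, and `ρ₀` is a full-support probability
measure with finite second moment. -/
theorem hessian_positive_definite (n m d : ℕ) (hn : 0 < n) (hm : 0 < m) (hd : 0 < d)
    (γ : ℝ) (hγ : γ ∈ Set.Ioo (0 : ℝ) 1)
    (A Q : Matrix (Fin n) (Fin n) ℝ) (B : Matrix (Fin n) (Fin m) ℝ)
    (K : Matrix (Fin m) (Fin n) ℝ)
    (R : Matrix (Fin m) (Fin m) ℝ) (hQ : Q.PosSemidef) (hR : R.PosDef)
    (hstab : γ * ‖A + B * K‖ ^ 2 < 1)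
    (f : Fin d → (Fin n → ℝ) → (Fin m → ℝ))
    (hLip : ∀ k, ∃ L : NNReal, LipschitzWith L (f k))
    (hfc : ∀ k, Continuous (f k)) (hfi : LinearIndependent ℝ f)
    (ρ₀ : Measure (Fin n → ℝ)) [IsProbabilityMeasure ρ₀]
    (hsupp : ∀ U : Set (Fin n → ℝ), IsOpen U → U.Nonempty → 0 < ρ₀ U)
    (hmom : Integrable (fun x => ‖x‖ ^ 2) ρ₀) :
    (Summable fun s : ℕ =>
      γ ^ s • (((A + B * K) ^ s)ᵀ * (Q + Kᵀ * R * K) * (A + B * K) ^ s)) ∧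
    (Pmat γ (A + B * K) (Q + Kᵀ * R * K)).PosSemidef ∧
    (∀ i j : Fin d, ∀ x : Fin n → ℝ,
      Summable fun t : ℕ => γ ^ t *
        (f i (((A + B * K) ^ t).mulVec x) ⬝ᵥ R.mulVec (f j (((A + B * K) ^ t).mulVec x)))) ∧
    (∀ i j : Fin d,
      Integrable (fun x =>
        f i x ⬝ᵥ (Bᵀ * Pmat γ (A + B * K) (Q + Kᵀ * R * K) * B).mulVec (f j x) +
        ∑' t : ℕ, γ ^ t *
          (f i (((A + B * K) ^ t).mulVec x) ⬝ᵥ R.mulVec (f j (((A + B * K) ^ t).mulVec x))))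
        ρ₀) ∧
    (hessH γ (A + B * K) B (Pmat γ (A + B * K) (Q + Kᵀ * R * K)) R f ρ₀).IsSymm ∧
    (∀ Δθ : Fin d → ℝ, Δθ ≠ 0 →
      0 < Δθ ⬝ᵥ (hessH γ (A + B * K) B
        (Pmat γ (A + B * K) (Q + Kᵀ * R * K)) R f ρ₀).mulVec Δθ) := by
  obtain ⟨hγ0', hγ1⟩ := hγ
  have hγ0 : (0:ℝ) ≤ γ := le_of_lt hγ0'
  set 𝒜 := A + B * K with h𝒜
  set Qb := Q + Kᵀ * R * K with hQbdef
  -- Q̄ is PSD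
  have hKRK : (Kᵀ * R * K).PosSemidef := by
    have := hR.posSemidef.conjTranspose_mul_mul_same K
    rwa [Matrix.conjTranspose_eq_transpose_of_trivial] at this
  have hQbpsd : Qb.PosSemidef := hQ.add hKRK
  -- 1. matrix series summable
  have h1 : Summable fun s : ℕ => γ ^ s • ((𝒜 ^ s)ᵀ * Qb * 𝒜 ^ s) :=
    matrix_series_summable hγ0 𝒜 Qb hstab
  -- 2. P is PSD
  have hPpsd : (Pmat γ 𝒜 Qb).PosSemidef := by
    apply tsum_posSemidef h1
    intro s
    apply psd_smul (pow_nonneg hγ0 s)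
    have := hQbpsd.conjTranspose_mul_mul_same (𝒜 ^ s)
    rwa [Matrix.conjTranspose_eq_transpose_of_trivial] at this
  set P := Pmat γ 𝒜 Qb with hPdef
  set M := Bᵀ * P * B with hMdef
  have hMpsd : M.PosSemidef := by
    have := hPpsd.conjTranspose_mul_mul_same B
    rwa [Matrix.conjTranspose_eq_transpose_of_trivial] at this
  -- growth constants
  set C : Fin d → ℝ := fun k => ((hLip k).choose : ℝ) + ‖f k 0‖ with hCdef
  have hCk : ∀ k (y : Fin n → ℝ), ‖f k y‖ ≤ C k * (1 + ‖y‖) := fun k =>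
    lip_growth (f k) _ (hLip k).choose_spec
  have hCk0 : ∀ k, 0 ≤ C k := fun k => add_nonneg (NNReal.coe_nonneg _) (norm_nonneg _)
  -- 3. summability of each scalar series
  have master : ∀ i j : Fin d, ∃ D : ℝ, 0 ≤ D ∧ ∀ x : Fin n → ℝ,
      (Summable fun t : ℕ =>
        γ ^ t * (f i ((𝒜 ^ t).mulVec x) ⬝ᵥ R.mulVec (f j ((𝒜 ^ t).mulVec x)))) ∧
      |∑' t : ℕ, γ ^ t * (f i ((𝒜 ^ t).mulVec x) ⬝ᵥ R.mulVec (f j ((𝒜 ^ t).mulVec x)))| ≤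
        D * (1 + ‖x‖ ^ 2) :=
    fun i j => series_master hγ0 hγ1 𝒜 R hstab (f i) (f j) (hCk i) (hCk j)
  have h3 : ∀ i j : Fin d, ∀ x : Fin n → ℝ,
      Summable fun t : ℕ =>
        γ ^ t * (f i ((𝒜 ^ t).mulVec x) ⬝ᵥ R.mulVec (f j ((𝒜 ^ t).mulVec x))) := by
    intro i j x
    obtain ⟨D, _, hD⟩ := master i j
    exact (hD x).1
  -- 4. integrability
  have hmom1 : Integrable (fun x : Fin n → ℝ => 1 + ‖x‖ ^ 2) ρ₀ :=
    (integrable_const (1:ℝ)).add hmom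
  set cM : ℝ := ∑ i, ∑ j, |M i j| with hcMdef
  have h4 : ∀ i j : Fin d,
      Integrable (fun x =>
        f i x ⬝ᵥ M.mulVec (f j x) +
        ∑' t : ℕ, γ ^ t *
          (f i ((𝒜 ^ t).mulVec x) ⬝ᵥ R.mulVec (f j ((𝒜 ^ t).mulVec x)))) ρ₀ := by
    intro i j
    obtain ⟨D, hD0, hD⟩ := master i j
    have hmeas1 : Continuous fun x => f i x ⬝ᵥ M.mulVec (f j x) :=
      continuous_dotform M (hfc i) (hfc j)
    have hmeas2 : Measurable fun x : Fin n → ℝ => ∑' t : ℕ,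
        γ ^ t * (f i ((𝒜 ^ t).mulVec x) ⬝ᵥ R.mulVec (f j ((𝒜 ^ t).mulVec x))) := by
      apply measurable_tsum_of_continuous
      · intro t
        exact continuous_const.mul (continuous_dotform R
          ((hfc i).comp (continuous_mulVec _)) ((hfc j).comp (continuous_mulVec _)))
      · exact fun x => h3 i j x
    apply Integrable.mono' (g := fun x => (2 * cM * C i * C j + D) * (1 + ‖x‖ ^ 2))
      (hmom1.const_mul _)
      ((hmeas1.measurable.add hmeas2).aestronglyMeasurable)
    apply Filter.Eventually.of_forall
    intro x
    have e1 : |f i x ⬝ᵥ M.mulVec (f j x)| ≤ 2 * cM * C i * C j * (1 + ‖x‖ ^ 2) :=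
      dotform_abs_bound M _ _ (hCk0 i) (hCk0 j) (norm_nonneg x) (hCk i x) (hCk j x)
    have e2 := (hD x).2
    calc ‖f i x ⬝ᵥ M.mulVec (f j x) + ∑' t : ℕ, γ ^ t *
            (f i ((𝒜 ^ t).mulVec x) ⬝ᵥ R.mulVec (f j ((𝒜 ^ t).mulVec x)))‖
        ≤ |f i x ⬝ᵥ M.mulVec (f j x)| + |∑' t : ℕ, γ ^ t *
            (f i ((𝒜 ^ t).mulVec x) ⬝ᵥ R.mulVec (f j ((𝒜 ^ t).mulVec x)))| := by
          rw [Real.norm_eq_abs]; exact abs_add_le _ _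
      _ ≤ 2 * cM * C i * C j * (1 + ‖x‖ ^ 2) + D * (1 + ‖x‖ ^ 2) := add_le_add e1 e2
      _ = (2 * cM * C i * C j + D) * (1 + ‖x‖ ^ 2) := by ring
  -- symmetry facts
  have hPT : Pᵀ = P := by
    rw [← Matrix.conjTranspose_eq_transpose_of_trivial]
    exact hPpsd.1
  have hMT : Mᵀ = M := by
    rw [hMdef, Matrix.transpose_mul, Matrix.transpose_mul, Matrix.transpose_transpose, hPT,
      Matrix.mul_assoc]
  have hRT : Rᵀ = R := by
    rw [← Matrix.conjTranspose_eq_transpose_of_trivial]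
    exact hR.1
  -- 5. symmetry of H
  have h5 : (hessH γ 𝒜 B P R f ρ₀).IsSymm := by
    apply Matrix.ext
    intro i j
    rw [Matrix.transpose_apply]
    show (hessH γ 𝒜 B P R f ρ₀) j i = (hessH γ 𝒜 B P R f ρ₀) i j
    simp only [hessH, Matrix.of_apply]
    have hfun : (fun x => f j x ⬝ᵥ (Bᵀ * P * B).mulVec (f i x) +
        ∑' t : ℕ, γ ^ t * (f j ((𝒜 ^ t).mulVec x) ⬝ᵥ R.mulVec (f i ((𝒜 ^ t).mulVec x)))) =
        (fun x => f i x ⬝ᵥ (Bᵀ * P * B).mulVec (f j x) +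
        ∑' t : ℕ, γ ^ t * (f i ((𝒜 ^ t).mulVec x) ⬝ᵥ R.mulVec (f j ((𝒜 ^ t).mulVec x)))) := by
      funext x
      rw [dot_symm _ hMT]
      congr 1
      exact tsum_congr fun t => by rw [dot_symm _ hRT]
    rw [hfun]
  refine ⟨h1, hPpsd, h3, h4, h5, ?_⟩
  -- 6. positive definiteness
  intro Δθ hΔθ0
  set g := fun x : Fin n → ℝ => ∑ k, Δθ k • f k x with hgdef
  have hgb : ∀ y, ‖g y‖ ≤ (∑ k, |Δθ k| * C k) * (1 + ‖y‖) := by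
    intro y
    calc ‖g y‖ ≤ ∑ k, ‖Δθ k • f k y‖ := norm_sum_le _ _
      _ = ∑ k, |Δθ k| * ‖f k y‖ := by
          refine Finset.sum_congr rfl fun k _ => ?_
          rw [norm_smul, Real.norm_eq_abs]
      _ ≤ ∑ k, |Δθ k| * (C k * (1 + ‖y‖)) :=
          Finset.sum_le_sum fun k _ => mul_le_mul_of_nonneg_left (hCk k y) (abs_nonneg _)
      _ = (∑ k, |Δθ k| * C k) * (1 + ‖y‖) := by
          rw [Finset.sum_mul]
          refine Finset.sum_congr rfl fun k _ => ?_
          ring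
  obtain ⟨Dg, hDg0, hDg⟩ := series_master hγ0 hγ1 𝒜 R hstab g g hgb hgb
  have hgsum : ∀ x, Summable fun t : ℕ =>
      γ ^ t * (g ((𝒜 ^ t).mulVec x) ⬝ᵥ R.mulVec (g ((𝒜 ^ t).mulVec x))) :=
    fun x => (hDg x).1
  have hgcont : Continuous g :=
    continuous_finset_sum _ fun k _ => (hfc k).const_smul (Δθ k)
  -- pointwise identity
  have hpoint : ∀ x : Fin n → ℝ,
      ∑ i, ∑ j, Δθ i * Δθ j * (f i x ⬝ᵥ M.mulVec (f j x) +
        ∑' t : ℕ, γ ^ t * (f i ((𝒜 ^ t).mulVec x) ⬝ᵥ R.mulVec (f j ((𝒜 ^ t).mulVec x)))) =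
      g x ⬝ᵥ M.mulVec (g x) +
        ∑' t : ℕ, γ ^ t * (g ((𝒜 ^ t).mulVec x) ⬝ᵥ R.mulVec (g ((𝒜 ^ t).mulVec x))) := by
    intro x
    have split : ∑ i, ∑ j, Δθ i * Δθ j * (f i x ⬝ᵥ M.mulVec (f j x) +
        ∑' t : ℕ, γ ^ t * (f i ((𝒜 ^ t).mulVec x) ⬝ᵥ R.mulVec (f j ((𝒜 ^ t).mulVec x)))) =
        (∑ i, ∑ j, Δθ i * Δθ j * (f i x ⬝ᵥ M.mulVec (f j x))) +
        (∑ i, ∑ j, Δθ i * Δθ j *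
          ∑' t : ℕ, γ ^ t * (f i ((𝒜 ^ t).mulVec x) ⬝ᵥ R.mulVec (f j ((𝒜 ^ t).mulVec x)))) := by
      rw [← Finset.sum_add_distrib]
      refine Finset.sum_congr rfl fun i _ => ?_
      rw [← Finset.sum_add_distrib]
      refine Finset.sum_congr rfl fun j _ => ?_
      ring
    rw [split, bilin_expand M Δθ (fun k => f k x),
      sum_sum_tsum_expand Δθ γ R (fun k t => f k ((𝒜 ^ t).mulVec x)) (fun i j => h3 i j x)]
  -- the quadratic form as an integral
  have hInt2 : ∀ i j : Fin d, Integrable (fun x => Δθ i * Δθ j *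
      (f i x ⬝ᵥ M.mulVec (f j x) +
        ∑' t : ℕ, γ ^ t * (f i ((𝒜 ^ t).mulVec x) ⬝ᵥ R.mulVec (f j ((𝒜 ^ t).mulVec x))))) ρ₀ :=
    fun i j => (h4 i j).const_mul _
  have hquad : Δθ ⬝ᵥ (hessH γ 𝒜 B P R f ρ₀).mulVec Δθ =
      ∫ x, (g x ⬝ᵥ M.mulVec (g x) +
        ∑' t : ℕ, γ ^ t * (g ((𝒜 ^ t).mulVec x) ⬝ᵥ R.mulVec (g ((𝒜 ^ t).mulVec x)))) ∂ρ₀ := by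
    calc Δθ ⬝ᵥ (hessH γ 𝒜 B P R f ρ₀).mulVec Δθ
        = ∑ i, ∑ j, Δθ i * Δθ j * (hessH γ 𝒜 B P R f ρ₀) i j := by
          simp only [dotProduct, Matrix.mulVec]
          refine Finset.sum_congr rfl fun i _ => ?_
          rw [Finset.mul_sum]
          refine Finset.sum_congr rfl fun j _ => ?_
          ring
      _ = ∑ i, ∑ j, ∫ x, Δθ i * Δθ j * (f i x ⬝ᵥ M.mulVec (f j x) +
            ∑' t : ℕ, γ ^ t *
              (f i ((𝒜 ^ t).mulVec x) ⬝ᵥ R.mulVec (f j ((𝒜 ^ t).mulVec x)))) ∂ρ₀ := by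
          refine Finset.sum_congr rfl fun i _ => Finset.sum_congr rfl fun j _ => ?_
          rw [show (hessH γ 𝒜 B P R f ρ₀) i j = ∫ x, (f i x ⬝ᵥ M.mulVec (f j x) +
            ∑' t : ℕ, γ ^ t *
              (f i ((𝒜 ^ t).mulVec x) ⬝ᵥ R.mulVec (f j ((𝒜 ^ t).mulVec x)))) ∂ρ₀ from rfl]
          rw [integral_const_mul]
      _ = ∑ i, ∫ x, ∑ j, Δθ i * Δθ j * (f i x ⬝ᵥ M.mulVec (f j x) +
            ∑' t : ℕ, γ ^ t *
              (f i ((𝒜 ^ t).mulVec x) ⬝ᵥ R.mulVec (f j ((𝒜 ^ t).mulVec x)))) ∂ρ₀ := by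
          refine Finset.sum_congr rfl fun i _ => ?_
          rw [integral_finset_sum _ fun j _ => hInt2 i j]
      _ = ∫ x, ∑ i, ∑ j, Δθ i * Δθ j * (f i x ⬝ᵥ M.mulVec (f j x) +
            ∑' t : ℕ, γ ^ t *
              (f i ((𝒜 ^ t).mulVec x) ⬝ᵥ R.mulVec (f j ((𝒜 ^ t).mulVec x)))) ∂ρ₀ := by
          rw [integral_finset_sum _ fun i _ =>
            integrable_finset_sum _ fun j _ => hInt2 i j]
      _ = ∫ x, (g x ⬝ᵥ M.mulVec (g x) +
            ∑' t : ℕ, γ ^ t *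
              (g ((𝒜 ^ t).mulVec x) ⬝ᵥ R.mulVec (g ((𝒜 ^ t).mulVec x)))) ∂ρ₀ := by
          congr 1
          funext x
          exact hpoint x
  -- integrability of F and h
  have hFint : Integrable (fun x => g x ⬝ᵥ M.mulVec (g x) +
      ∑' t : ℕ, γ ^ t * (g ((𝒜 ^ t).mulVec x) ⬝ᵥ R.mulVec (g ((𝒜 ^ t).mulVec x)))) ρ₀ := by
    have e : (fun x => ∑ i, ∑ j, Δθ i * Δθ j * (f i x ⬝ᵥ M.mulVec (f j x) +
        ∑' t : ℕ, γ ^ t * (f i ((𝒜 ^ t).mulVec x) ⬝ᵥ R.mulVec (f j ((𝒜 ^ t).mulVec x))))) =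
        (fun x => g x ⬝ᵥ M.mulVec (g x) +
        ∑' t : ℕ, γ ^ t * (g ((𝒜 ^ t).mulVec x) ⬝ᵥ R.mulVec (g ((𝒜 ^ t).mulVec x)))) :=
      funext hpoint
    rw [← e]
    exact integrable_finset_sum _ fun i _ => integrable_finset_sum _ fun j _ => hInt2 i j
  have hCg0 : 0 ≤ ∑ k, |Δθ k| * C k :=
    Finset.sum_nonneg fun k _ => mul_nonneg (abs_nonneg _) (hCk0 k)
  have hhcont : Continuous fun x => g x ⬝ᵥ R.mulVec (g x) :=
    continuous_dotform R hgcont hgcont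
  have hhint : Integrable (fun x => g x ⬝ᵥ R.mulVec (g x)) ρ₀ := by
    apply Integrable.mono'
      (g := fun x => 2 * (∑ i, ∑ j, |R i j|) * (∑ k, |Δθ k| * C k) * (∑ k, |Δθ k| * C k) *
        (1 + ‖x‖ ^ 2))
      (hmom1.const_mul _) hhcont.measurable.aestronglyMeasurable
    apply Filter.Eventually.of_forall
    intro x
    rw [Real.norm_eq_abs]
    exact dotform_abs_bound R _ _ hCg0 hCg0 (norm_nonneg x) (hgb x) (hgb x)
  have hhnn : ∀ x, 0 ≤ g x ⬝ᵥ R.mulVec (g x) := by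
    intro x
    have := hR.posSemidef.dotProduct_mulVec_nonneg (g x)
    simpa using this
  -- pointwise lower bound h ≤ F
  have hle : ∀ x, g x ⬝ᵥ R.mulVec (g x) ≤ g x ⬝ᵥ M.mulVec (g x) +
      ∑' t : ℕ, γ ^ t * (g ((𝒜 ^ t).mulVec x) ⬝ᵥ R.mulVec (g ((𝒜 ^ t).mulVec x))) := by
    intro x
    have t1 : 0 ≤ g x ⬝ᵥ M.mulVec (g x) := by
      have := hMpsd.dotProduct_mulVec_nonneg (g x)
      simpa using this
    have t2 : g x ⬝ᵥ R.mulVec (g x) ≤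
        ∑' t : ℕ, γ ^ t * (g ((𝒜 ^ t).mulVec x) ⬝ᵥ R.mulVec (g ((𝒜 ^ t).mulVec x))) := by
      have h0 := Summable.le_tsum (hgsum x) 0 (fun t _ =>
        mul_nonneg (pow_nonneg hγ0 t) (by simpa using hR.posSemidef.dotProduct_mulVec_nonneg (g ((𝒜 ^ t).mulVec x))))
      simpa [pow_zero, Matrix.one_mulVec] using h0
    linarith
  -- g is nonzero somewhere
  have hgne : ∃ x₀, g x₀ ≠ 0 := by
    by_contra hcon
    push_neg at hcon
    have hzero : ∑ k, Δθ k • f k = 0 := by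
      funext y
      have hy := hcon y
      simpa [hgdef, Finset.sum_apply, Pi.smul_apply] using hy
    have hall := Fintype.linearIndependent_iff.mp hfi Δθ hzero
    exact hΔθ0 (funext hall)
  obtain ⟨x₀, hx₀⟩ := hgne
  have hhx₀ : 0 < g x₀ ⬝ᵥ R.mulVec (g x₀) := by
    have := hR.dotProduct_mulVec_pos hx₀
    simpa using this
  have hpos : 0 < ∫ x, g x ⬝ᵥ R.mulVec (g x) ∂ρ₀ :=
    integral_pos_of_cont ρ₀ hsupp _ hhcont hhnn hhint x₀ hhx₀
  have hmono : ∫ x, g x ⬝ᵥ R.mulVec (g x) ∂ρ₀ ≤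
      ∫ x, (g x ⬝ᵥ M.mulVec (g x) +
        ∑' t : ℕ, γ ^ t * (g ((𝒜 ^ t).mulVec x) ⬝ᵥ R.mulVec (g ((𝒜 ^ t).mulVec x)))) ∂ρ₀ :=
    integral_mono hhint hFint hle
  rw [hquad]
  linarith
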